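/- Let K ≥ 1, let ρ ∈ (K/2, K] be real, let φ be a strictly decreasing function on the positive integers with φ(N) → 0, and let X be a (ρ,φ)-regular configuration. Let N be a positive integer with φ(N) < ρ − K/2. Then for every integer t with 4t ≥ (N+1)², the dual configuration (T^t X)* is free; equivalently, (T^t X)(x) + (T^t X)(x+1) ≥ K for every x ∈ ℤ. -/

import Mathlib

/-- A configuration on the `K`-lane road: at most `K` particles per site. -/
def IsConf (K : ℤ) (X : ℤ → ℤ) : Prop := ∀ x, 0 ≤ X x ∧ X x ≤ K

/-- The traffic map `T`. -/
def Tmap (K : ℤ) (X : ℤ → ℤ) : ℤ → ℤ := fun x =>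
  X x + min (X (x - 1)) (K - X x) - min (X x) (K - X (x + 1))

/-- A configuration is free if `X(x) + X(x+1) ≤ K` for all `x`. -/
def IsFree (K : ℤ) (X : ℤ → ℤ) : Prop := ∀ x, X x + X (x + 1) ≤ K

/-- The number of particles `m(X,a,b) = Σ_{x=a}^{b} X(x)`. -/
noncomputable def msum (X : ℤ → ℤ) (a b : ℤ) : ℤ := ∑ x ∈ Finset.Icc a b, X x

/-- `X` is `(ρ,φ)`-regular: every window of length `N` has particle density
within `φ(N)` of `ρ`. -/
def IsRegularConf (ρ : ℝ) (φ : ℕ → ℝ) (X : ℤ → ℤ) : Prop :=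
  ∀ (n : ℤ) (N : ℕ), 1 ≤ N → |(msum X (n + 1) (n + N) : ℝ) / N - ρ| ≤ φ N

/-- The dual configuration `X*(x) = K - X(x)`, describing empty places. -/
def dualConf (K : ℤ) (X : ℤ → ℤ) : ℤ → ℤ := fun x => K - X x

/- ### Auxiliary material -/

private lemma Icc_insert_top (a b : ℤ) (h : a ≤ b + 1) :
    Finset.Icc a (b + 1) = insert (b + 1) (Finset.Icc a b) := by
  ext y
  simp only [Finset.mem_Icc, Finset.mem_insert]
  omega

private lemma msum_succ_top (Y : ℤ → ℤ) (a b : ℤ) (h : a ≤ b + 1) :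
    msum Y a (b + 1) = msum Y a b + Y (b + 1) := by
  unfold msum
  rw [Icc_insert_top a b h, Finset.sum_insert (by simp only [Finset.mem_Icc]; omega)]
  ring

private lemma msum_empty (Y : ℤ → ℤ) (a b : ℤ) (h : b < a) : msum Y a b = 0 := by
  unfold msum
  rw [Finset.Icc_eq_empty (by omega), Finset.sum_empty]

/-- Cumulative potential: `Ssum Y x − Ssum Y (x-1) = Y x`. -/
private noncomputable def Ssum (Y : ℤ → ℤ) : ℤ → ℤ := fun x =>
  if 1 ≤ x then msum Y 1 x else - msum Y (x + 1) 0

private lemma Ssum_succ (Y : ℤ → ℤ) (x : ℤ) : Ssum Y x = Ssum Y (x - 1) + Y x := by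
  unfold Ssum
  rcases lt_trichotomy x 1 with h | h | h
  · rw [if_neg (by omega)]
    rcases lt_or_ge (x - 1) 1 with h2 | h2
    · rw [if_neg (by omega)]
      have : msum Y x 0 = msum Y (x + 1) 0 + Y x := by
        rcases eq_or_lt_of_le (show x ≤ 0 by omega) with h0 | h0
        · subst h0; simp [msum]
        · have := msum_succ_top Y (x + 1) (-1) (by omega)
          simp only [show (-1 : ℤ) + 1 = 0 by ring] at this
          have hx : msum Y x 0 = Y x + (msum Y (x+1) 0) := by
            unfold msum
            rw [show Finset.Icc x 0 = insert x (Finset.Icc (x+1) 0) by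
              ext y; simp only [Finset.mem_Icc, Finset.mem_insert]; omega,
              Finset.sum_insert (by simp only [Finset.mem_Icc]; omega)]
          omega
      have e : x - 1 + 1 = x := by ring
      rw [e]
      omega
    · omega
  · subst h
    rw [if_pos le_rfl, if_neg (by omega)]
    simp [msum]
  · rw [if_pos (by omega), if_pos (by omega)]
    have := msum_succ_top Y 1 (x - 1) (by omega)
    rw [show x - 1 + 1 = x by ring] at this
    omega

private lemma msum_eq_Ssum (Y : ℤ → ℤ) (a b : ℤ) (h : a ≤ b + 1) :
    msum Y a b = Ssum Y b - Ssum Y (a - 1) := by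
  have key : ∀ n : ℕ, ∀ b : ℤ, b = a - 1 + n → msum Y a b = Ssum Y b - Ssum Y (a - 1) := by
    intro n
    induction n with
    | zero => intro b hb; rw [msum_empty Y a b (by omega)]; rw [show b = a - 1 by omega]; ring
    | succ m ih =>
      intro b hb
      have hb' : b = (a - 1 + m) + 1 := by push_cast [hb]; ring
      rw [hb', msum_succ_top Y a _ (by omega), ih _ rfl, Ssum_succ Y (a - 1 + m + 1)]
      ring
  obtain ⟨n, hn⟩ : ∃ n : ℕ, b = a - 1 + n := ⟨(b - (a - 1)).toNat, by omega⟩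
  exact key n b hn

/-- The min-plus kernel `G`. -/
private noncomputable def Gfun (K : ℤ) (Y : ℤ → ℤ) (t : ℕ) (x : ℤ) (j : ℕ) : ℤ :=
  Ssum Y x - Ssum Y (x + t - 2 * j) + ((t : ℤ) - j) * K

/-- The cumulative flux `F`, defined by the min-plus recursion. -/
private noncomputable def Ffun (K : ℤ) (Y : ℤ → ℤ) : ℕ → ℤ → ℤ
  | 0 => fun _ => 0
  | (t + 1) => fun x =>
      min (Ffun K Y t (x - 1) + Y x) (Ffun K Y t (x + 1) + K - Y (x + 1))

private lemma Ffun_le_Gfun (K : ℤ) (Y : ℤ → ℤ) :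
    ∀ (t : ℕ) (x : ℤ) (j : ℕ), j ≤ t → Ffun K Y t x ≤ Gfun K Y t x j := by
  intro t
  induction t with
  | zero =>
    intro x j hj
    interval_cases j
    simp only [Ffun, Gfun]
    norm_num
  | succ t ih =>
    intro x j hj
    rcases j with _ | j'
    · -- j = 0 : right branch
      have h1 : Ffun K Y (t + 1) x ≤ Ffun K Y t (x + 1) + K - Y (x + 1) := by
        simp only [Ffun]; exact min_le_right _ _
      have h2 := ih (x + 1) 0 (Nat.zero_le t)
      have h3 : Gfun K Y t (x + 1) 0 + K - Y (x + 1) = Gfun K Y (t + 1) x 0 := by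
        simp only [Gfun]
        have e1 : x + 1 + (t : ℤ) - 2 * (0 : ℕ) = x + ((t : ℤ) + 1) - 2 * (0 : ℕ) := by
          push_cast; ring
        have e2 : Ssum Y (x + 1) = Ssum Y (x + 1 - 1) + Y (x + 1) := Ssum_succ Y (x + 1)
        rw [e1] at *
        push_cast
        rw [e2, show x + 1 - 1 = x by ring]
        ring
      omega
    · -- j = j' + 1 : left branch
      have h1 : Ffun K Y (t + 1) x ≤ Ffun K Y t (x - 1) + Y x := by
        simp only [Ffun]; exact min_le_left _ _
      have h2 := ih (x - 1) j' (by omega)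
      have h3 : Gfun K Y t (x - 1) j' + Y x = Gfun K Y (t + 1) x (j' + 1) := by
        simp only [Gfun]
        have e2 : Ssum Y x = Ssum Y (x - 1) + Y x := Ssum_succ Y x
        have e1 : x - 1 + (t : ℤ) - 2 * (j' : ℕ) = x + ((t : ℤ) + 1) - 2 * ((j' : ℤ) + 1) := by
          push_cast; ring
        push_cast at e1 ⊢
        rw [e1, e2]
        ring
      omega

private lemma Ffun_exists_Gfun (K : ℤ) (Y : ℤ → ℤ) :
    ∀ (t : ℕ) (x : ℤ), ∃ j : ℕ, j ≤ t ∧ Ffun K Y t x = Gfun K Y t x j := by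
  intro t
  induction t with
  | zero =>
    intro x
    refine ⟨0, le_rfl, ?_⟩
    simp only [Ffun, Gfun]
    norm_num
  | succ t ih =>
    intro x
    rcases le_total (Ffun K Y t (x - 1) + Y x) (Ffun K Y t (x + 1) + K - Y (x + 1)) with h | h
    · obtain ⟨j, hj, hje⟩ := ih (x - 1)
      refine ⟨j + 1, by omega, ?_⟩
      have hmin : Ffun K Y (t + 1) x = Ffun K Y t (x - 1) + Y x := by
        simp only [Ffun]; exact min_eq_left h
      have h3 : Gfun K Y t (x - 1) j + Y x = Gfun K Y (t + 1) x (j + 1) := by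
        simp only [Gfun]
        have e2 : Ssum Y x = Ssum Y (x - 1) + Y x := Ssum_succ Y x
        push_cast
        ring_nf
        ring_nf at e2
        linarith [e2]
      omega
    · obtain ⟨j, hj, hje⟩ := ih (x + 1)
      refine ⟨j, by omega, ?_⟩
      have hmin : Ffun K Y (t + 1) x = Ffun K Y t (x + 1) + K - Y (x + 1) := by
        simp only [Ffun]; exact min_eq_right h
      have h3 : Gfun K Y t (x + 1) j + K - Y (x + 1) = Gfun K Y (t + 1) x j := by
        simp only [Gfun]
        have e2 : Ssum Y (x + 1) = Ssum Y (x + 1 - 1) + Y (x + 1) := Ssum_succ Y (x + 1)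
        rw [show x + 1 - 1 = x by ring] at e2
        push_cast
        ring_nf
        ring_nf at e2
        linarith [e2]
      omega

/-- The iterates of the traffic map are expressed via the cumulative flux. -/
private lemma iterate_eq_Ffun (K : ℤ) (Y : ℤ → ℤ) :
    ∀ (t : ℕ) (x : ℤ),
      (Tmap K)^[t] Y x = Y x + Ffun K Y t (x - 1) - Ffun K Y t x := by
  intro t
  induction t with
  | zero => intro x; simp [Ffun]
  | succ t ih =>
    intro x
    rw [Function.iterate_succ_apply']
    set Z := (Tmap K)^[t] Y with hZdef
    have hZ : ∀ y, Z y = Y y + Ffun K Y t (y - 1) - Ffun K Y t y := ih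
    show Tmap K Z x = Y x + Ffun K Y (t + 1) (x - 1) - Ffun K Y (t + 1) x
    have hF : ∀ y : ℤ, Ffun K Y (t + 1) y =
        min (Ffun K Y t (y - 1) + Y y) (Ffun K Y t (y + 1) + K - Y (y + 1)) := by
      intro y; simp only [Ffun]
    rw [Tmap, hZ (x - 1), hZ x, hZ (x + 1), hF (x - 1), hF x,
      show x - 1 + 1 = x by ring, show x + 1 - 1 = x by ring]
    set a := Ffun K Y t (x - 1 - 1)
    set b := Ffun K Y t (x - 1)
    set c := Ffun K Y t x
    set d := Ffun K Y t (x + 1)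
    have m1 : min (Y (x - 1) + a - b) (K - (Y x + b - c)) =
        min (a + Y (x - 1)) (c + K - Y x) - b := by
      rw [show Y (x - 1) + a - b = (a + Y (x - 1)) - b by ring,
        show K - (Y x + b - c) = (c + K - Y x) - b by ring, min_sub_sub_right]
    have m2 : min (Y x + b - c) (K - (Y (x + 1) + c - d)) =
        min (b + Y x) (d + K - Y (x + 1)) - c := by
      rw [show Y x + b - c = (b + Y x) - c by ring,
        show K - (Y (x + 1) + c - d) = (d + K - Y (x + 1)) - c by ring, min_sub_sub_right]
    rw [m1, m2]
    ring

/-- Key lemma: a configuration with (integer-quantified) density below `K/2`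
on all windows of length `≥ N` is free after time `t` with `N + 1 ≤ 2t`. -/
private lemma low_density_free (K : ℤ) (Y : ℤ → ℤ) (N : ℕ) (hN : 1 ≤ N)
    (hdens : ∀ (n : ℤ) (L : ℕ), N ≤ L → 2 * msum Y (n + 1) (n + L) < (L : ℤ) * K)
    (t : ℕ) (ht : N + 1 ≤ 2 * t) :
    ∀ x, (Tmap K)^[t] Y x + (Tmap K)^[t] Y (x + 1) ≤ K := by
  intro x
  rw [iterate_eq_Ffun K Y t x, iterate_eq_Ffun K Y t (x + 1), show x + 1 - 1 = x by ring]
  -- goal shape: Y x + F(x-1) - F x + (Y (x+1) + F x - F (x+1)) ≤ K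
  have key : Ffun K Y t (x - 1) ≤ Ffun K Y t (x + 1) + K - Y x - Y (x + 1) := by
    obtain ⟨j, hjt, hje⟩ := Ffun_exists_Gfun K Y t (x + 1)
    -- the minimizer j cannot be 0
    have hj0 : j ≠ 0 := by
      intro h0
      subst h0
      -- compare with j₀ = (N+1)/2
      set j₀ : ℕ := (N + 1) / 2 with hj₀def
      have hj₀1 : 1 ≤ j₀ := by omega
      have hj₀t : j₀ ≤ t := by omega
      have hj₀N : N ≤ 2 * j₀ := by omega
      have hle := Ffun_le_Gfun K Y t (x + 1) j₀ hj₀t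
      rw [hje] at hle
      -- G t (x+1) 0 ≤ G t (x+1) j₀ gives a dense window, contradiction
      have hwin : msum Y (x + t + 2 - 2 * j₀) (x + t + 1) =
          Ssum Y (x + t + 1) - Ssum Y (x + t + 1 - 2 * j₀) := by
        rw [msum_eq_Ssum Y _ _ (by omega), show x + t + 2 - 2 * (j₀ : ℤ) - 1 =
          x + t + 1 - 2 * (j₀ : ℤ) by ring]
      have hG : Gfun K Y t (x + 1) 0 - Gfun K Y t (x + 1) j₀ =
          (j₀ : ℤ) * K - msum Y (x + t + 2 - 2 * j₀) (x + t + 1) := by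
        simp only [Gfun]
        rw [hwin]
        push_cast
        ring_nf
      have hd := hdens (x + t + 1 - 2 * j₀) (2 * j₀) hj₀N
      rw [show x + (t : ℤ) + 1 - 2 * (j₀ : ℤ) + 1 = x + t + 2 - 2 * (j₀ : ℤ) by ring,
        show x + (t : ℤ) + 1 - 2 * (j₀ : ℤ) + ((2 * j₀ : ℕ) : ℤ) = x + t + 1 by
          push_cast; ring] at hd
      push_cast at hd
      linarith [hle, hG, hd]
    obtain ⟨j', rfl⟩ : ∃ j', j = j' + 1 := ⟨j - 1, by omega⟩
    have hle := Ffun_le_Gfun K Y t (x - 1) j' (by omega)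
    have hid : Gfun K Y t (x - 1) j' =
        Gfun K Y t (x + 1) (j' + 1) + K - Y x - Y (x + 1) := by
      simp only [Gfun]
      have e1 : Ssum Y (x + 1) = Ssum Y x + Y (x + 1) := by
        have := Ssum_succ Y (x + 1); rw [show x + 1 - 1 = x by ring] at this; exact this
      have e2 : Ssum Y x = Ssum Y (x - 1) + Y x := Ssum_succ Y x
      have e3 : x + 1 + (t : ℤ) - 2 * ((j' : ℤ) + 1) = x - 1 + (t : ℤ) - 2 * (j' : ℤ) := by
        ring
      push_cast at e3 ⊢
      rw [e3, e1, e2]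
      ring
    omega
  omega

/-- Duality–reflection commutes with the traffic map. -/
private lemma Tmap_dual (K : ℤ) (Z : ℤ → ℤ) :
    Tmap K (fun y => K - Z (-y)) = fun y => K - Tmap K Z (-y) := by
  funext x
  simp only [Tmap]
  rw [show -(x - 1) = -x + 1 by ring, show -(x + 1) = -x - 1 by ring]
  set a := Z (-x - 1)
  set b := Z (-x)
  set c := Z (-x + 1)
  rw [min_comm (K - c) (K - (K - b)), min_comm (K - b) (K - (K - a))]
  rw [show K - (K - b) = b by ring, show K - (K - a) = a by ring]
  rw [min_comm b (K - c), min_comm a (K - b)]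
  ring

private lemma iterate_dual (K : ℤ) (Z : ℤ → ℤ) :
    ∀ t : ℕ, (Tmap K)^[t] (fun y => K - Z (-y)) = fun y => K - (Tmap K)^[t] Z (-y) := by
  intro t
  induction t with
  | zero => rfl
  | succ t ih =>
    rw [Function.iterate_succ_apply', ih, Tmap_dual K ((Tmap K)^[t] Z)]
    funext y
    rw [Function.iterate_succ_apply']

private lemma msum_reflect (X : ℤ → ℤ) (K : ℤ) (a b : ℤ) (h : a ≤ b) :
    msum (fun y => K - X (-y)) a b = (b + 1 - a) * K - msum X (-b) (-a) := by
  unfold msum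
  have himg : Finset.Icc a b = Finset.image (fun z => -z) (Finset.Icc (-b) (-a)) := by
    ext y
    simp only [Finset.mem_Icc, Finset.mem_image]
    constructor
    · intro hy; exact ⟨-y, by omega, by ring⟩
    · rintro ⟨z, hz, rfl⟩; omega
  rw [himg, Finset.sum_image (by intro u _ v _ huv; simp only at huv; omega)]
  have : ∀ z ∈ Finset.Icc (-b) (-a), K - X (- -z) = K - X z := by
    intro z _; rw [neg_neg]
  rw [Finset.sum_congr rfl this, Finset.sum_sub_distrib, Finset.sum_const]
  rw [Int.card_Icc, nsmul_eq_mul]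
  have : ((-a + 1 - -b).toNat : ℤ) = b + 1 - a := by omega
  rw [this]

/-- A regular configuration with density above `K/2` becomes "dually free"
after the transient period of length `(N+1)²/4`. -/
theorem stmt_10 (K : ℤ) (hK : 1 ≤ K) (X : ℤ → ℤ) (hX : IsConf K X)
    (ρ : ℝ) (hρK2 : (K : ℝ) / 2 < ρ) (hρK : ρ ≤ K) (φ : ℕ → ℝ)
    (hφanti : StrictAntiOn φ (Set.Ici 1))
    (hφ0 : Filter.Tendsto φ Filter.atTop (nhds 0))
    (hreg : IsRegularConf ρ φ X)
    (N : ℕ) (hN : 1 ≤ N) (hNφ : φ N < ρ - K / 2)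
    (t : ℕ) (ht : (N + 1) ^ 2 ≤ 4 * t) :
    IsFree K (dualConf K ((Tmap K)^[t] X)) ∧
    (∀ x : ℤ, K ≤ (Tmap K)^[t] X x + (Tmap K)^[t] X (x + 1)) := by
  -- the dual-reflected configuration
  set Y : ℤ → ℤ := fun y => K - X (-y) with hYdef
  -- density of Y on long windows is below K/2
  have hdens : ∀ (n : ℤ) (L : ℕ), N ≤ L → 2 * msum Y (n + 1) (n + L) < (L : ℤ) * K := by
    intro n L hL
    have hL1 : 1 ≤ L := le_trans hN hL
    have hX2 : (L : ℤ) * K < 2 * msum X (-(n + L)) (-(n + 1)) := by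
      -- from regularity of X
      set m : ℤ := -(n + L) - 1 with hmdef
      have hm1 : m + 1 = -(n + L) := by omega
      have hmL : m + L = -(n + 1) := by omega
      have hr := hreg m L hL1
      have hφLN : φ L ≤ φ N := by
        rcases eq_or_lt_of_le hL with h | h
        · rw [h]
        · exact le_of_lt (hφanti (Set.mem_Ici.2 hN) (Set.mem_Ici.2 hL1) h)
      have habs : ρ - φ L ≤ (msum X (m + 1) (m + L) : ℝ) / L := by
        have := abs_le.1 hr
        linarith [this.1]
      have hKL : (K : ℝ) / 2 < (msum X (m + 1) (m + L) : ℝ) / L := by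
        have : (K : ℝ) / 2 < ρ - φ L := by linarith
        linarith
      have hLpos : (0 : ℝ) < (L : ℝ) := by exact_mod_cast hL1
      have : (L : ℝ) * K < 2 * (msum X (m + 1) (m + L) : ℝ) := by
        rw [div_lt_div_iff₀ (by norm_num) hLpos] at hKL
        nlinarith
      rw [hm1, hmL] at this
      exact_mod_cast this
    have hrefl : msum Y (n + 1) (n + L) =
        ((n + L) + 1 - (n + 1)) * K - msum X (-(n + L)) (-(n + 1)) := by
      exact msum_reflect X K (n + 1) (n + L) (by omega)
    rw [hrefl]
    have : ((n : ℤ) + L + 1 - (n + 1)) = (L : ℤ) := by ring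
    rw [this]
    omega
  have ht2 : N + 1 ≤ 2 * t := by nlinarith
  have hfreeY := low_density_free K Y N hN hdens t ht2
  have hdualit := iterate_dual K X t
  have main : ∀ x : ℤ, K ≤ (Tmap K)^[t] X x + (Tmap K)^[t] X (x + 1) := by
    intro x
    have hfx := hfreeY (-x - 1)
    rw [show (-x - 1 + 1 : ℤ) = -x by ring] at hfx
    have h1 : (Tmap K)^[t] Y (-x - 1) = K - (Tmap K)^[t] X (x + 1) := by
      rw [hdualit]
      show K - (Tmap K)^[t] X (-(-x - 1)) = _
      rw [show -(-x - 1) = x + 1 by ring]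
    have h2 : (Tmap K)^[t] Y (-x) = K - (Tmap K)^[t] X x := by
      rw [hdualit]
      show K - (Tmap K)^[t] X (-(-x)) = _
      rw [neg_neg]
    rw [h1, h2] at hfx
    omega
  refine ⟨?_, main⟩
  intro x
  simp only [dualConf]
  have := main x
  omega
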